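/- For each r ≥ 1, the graph G_r on vertices v_0, ..., v_{3r} (indices mod 3r+1), where v_i is adjacent to v_{i−1}, v_{i+1}, and v_{i+3j+2} for all j ∈ {0,...,r−1}, is 4-vertex-critical: it is not 3-colorable, but G_r − v is 3-colorable for every vertex v. -/

import Mathlib

/-- Pokrovskiy's graph `G_r` on vertices `ZMod (3r+1)`: `x` and `y` are adjacent
iff they differ by `±1` or by `±(3j+2)` for some `0 ≤ j < r`. -/
def pok (r : ℕ) : SimpleGraph (ZMod (3 * r + 1)) where
  Adj x y := x ≠ y ∧ (y - x = 1 ∨ x - y = 1 ∨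
    (∃ j < r, y - x = ((3 * j + 2 : ℕ) : ZMod (3 * r + 1))) ∨
    (∃ j < r, x - y = ((3 * j + 2 : ℕ) : ZMod (3 * r + 1))))
  symm := ⟨by
    rintro x y ⟨h1, h2⟩
    refine ⟨h1.symm, ?_⟩
    rcases h2 with h | h | h | h
    · exact Or.inr (Or.inl h)
    · exact Or.inl h
    · exact Or.inr (Or.inr (Or.inr h))
    · exact Or.inr (Or.inr (Or.inl h))⟩
  loopless := ⟨fun x h => h.1 rfl⟩

lemma fin3_aux : ∀ a b c d : Fin 3, (a ≠ b ∧ a ≠ c ∧ b ≠ c ∧ d ≠ b ∧ d ≠ c) → d = a := by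
  decide

lemma diff_cases (n : ℕ) [NeZero n] (u w : ZMod n) (t : ℕ) (ht : t < n)
    (h : w - u = (t : ZMod n)) : u.val + t = w.val ∨ u.val + t = w.val + n := by
  have hu := ZMod.val_lt u
  have hw := ZMod.val_lt w
  have hcast : ((u.val + t : ℕ) : ZMod n) = ((w.val : ℕ) : ZMod n) := by
    push_cast
    simp only [ZMod.natCast_val, ZMod.cast_id]
    linear_combination -h
  have hmod : (u.val + t) % n = w.val % n := (ZMod.natCast_eq_natCast_iff _ _ _).mp hcast
  rcases Nat.lt_or_ge (u.val + t) n with hc | hc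
  · left
    rwa [Nat.mod_eq_of_lt hc, Nat.mod_eq_of_lt hw] at hmod
  · right
    have h2 : (u.val + t) % n = u.val + t - n := by
      rw [Nat.mod_eq_sub_mod hc, Nat.mod_eq_of_lt (by omega)]
    rw [h2, Nat.mod_eq_of_lt hw] at hmod
    omega

/-- For `r ≥ 1`, the graph `G_r` is 4-vertex-critical: it is not 3-colorable,
but deleting any vertex yields a 3-colorable graph. -/
theorem pok_four_vertex_critical (r : ℕ) (hr : 1 ≤ r) :
    ¬ (pok r).Colorable 3 ∧
    ∀ v : ZMod (3 * r + 1),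
      ((pok r).induce ({v}ᶜ : Set (ZMod (3 * r + 1)))).Colorable 3 := by
  haveI : Fact (1 < 3 * r + 1) := ⟨by omega⟩
  constructor
  · rintro ⟨C⟩
    have adj1 : ∀ x : ZMod (3 * r + 1), (pok r).Adj x (x + 1) := by
      intro x
      refine ⟨?_, Or.inl (by ring)⟩
      intro h
      have : (1 : ZMod (3 * r + 1)) = 0 := by linear_combination -h
      exact one_ne_zero this
    have adj2 : ∀ x : ZMod (3 * r + 1), (pok r).Adj x (x + 2) := by
      intro x
      refine ⟨?_, Or.inr (Or.inr (Or.inl ⟨0, hr, by push_cast; ring⟩))⟩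
      intro h
      have h2 : ((2 : ℕ) : ZMod (3 * r + 1)) = 0 := by push_cast; linear_combination -h
      have := (ZMod.natCast_eq_zero_iff 2 (3 * r + 1)).mp h2
      have := Nat.le_of_dvd (by norm_num) this
      omega
    have hstep : ∀ x : ZMod (3 * r + 1), C (x + 3) = C x := by
      intro x
      have h1 : C x ≠ C (x + 1) := C.valid (adj1 x)
      have h2 : C x ≠ C (x + 2) := C.valid (adj2 x)
      have h3 : C (x + 1) ≠ C (x + 2) := by
        have := C.valid (adj1 (x + 1))
        rw [show x + 1 + 1 = x + 2 by ring] at this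
        exact this
      have h4 : C (x + 3) ≠ C (x + 1) := by
        have := C.valid (adj2 (x + 1))
        rw [show x + 1 + 2 = x + 3 by ring] at this
        exact this.symm
      have h5 : C (x + 3) ≠ C (x + 2) := by
        have := C.valid (adj1 (x + 2))
        rw [show x + 2 + 1 = x + 3 by ring] at this
        exact this.symm
      exact fin3_aux (C x) (C (x + 1)) (C (x + 2)) (C (x + 3)) ⟨h1, h2, h3, h4, h5⟩
    have key : ∀ (k : ℕ) (x : ZMod (3 * r + 1)), C (x + 3 * (k : ZMod (3 * r + 1))) = C x := by
      intro k
      induction k with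
      | zero => intro x; simp
      | succ k ih =>
        intro x
        have heq : x + 3 * ((k + 1 : ℕ) : ZMod (3 * r + 1)) = (x + 3) + 3 * (k : ZMod (3 * r + 1)) := by
          push_cast; ring
        rw [heq, ih, hstep]
    have hone : (3 : ZMod (3 * r + 1)) * ((2 * r + 1 : ℕ) : ZMod (3 * r + 1)) = 1 := by
      have hz : ((3 * r + 1 : ℕ) : ZMod (3 * r + 1)) = 0 := ZMod.natCast_self _
      push_cast at hz ⊢
      linear_combination 2 * hz
    have h01 : C 0 ≠ C 1 := by
      have := C.valid (adj1 0)
      rwa [zero_add] at this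
    have := key (2 * r + 1) 0
    rw [hone] at this
    simp only [zero_add] at this
    exact h01 this.symm
  · intro v
    refine ⟨SimpleGraph.Coloring.mk
      (fun x => ⟨((x : ZMod (3 * r + 1)) - v).val % 3, Nat.mod_lt _ (by norm_num)⟩) ?_⟩
    rintro ⟨x, hx⟩ ⟨y, hy⟩ hadj
    simp only [SimpleGraph.comap_adj, Function.Embedding.coe_subtype] at hadj
    intro hfeq
    have hmod : (x - v).val % 3 = (y - v).val % 3 := by
      simpa using hfeq
    simp only [Set.mem_compl_iff, Set.mem_singleton_iff] at hx hy
    have hxv : x - v ≠ 0 := sub_ne_zero.mpr hx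
    have hyv : y - v ≠ 0 := sub_ne_zero.mpr hy
    have hA0 : (x - v).val ≠ 0 := fun h => hxv ((ZMod.val_eq_zero _).mp h)
    have hB0 : (y - v).val ≠ 0 := fun h => hyv ((ZMod.val_eq_zero _).mp h)
    have hA : (x - v).val < 3 * r + 1 := ZMod.val_lt _
    have hB : (y - v).val < 3 * r + 1 := ZMod.val_lt _
    rcases hadj.2 with h | h | ⟨j, hj, h⟩ | ⟨j, hj, h⟩
    · have h' : (y - v) - (x - v) = ((1 : ℕ) : ZMod (3 * r + 1)) := by push_cast; linear_combination h
      rcases diff_cases (3 * r + 1) (x - v) (y - v) 1 (by omega) h' with hc | hc <;> omega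
    · have h' : (x - v) - (y - v) = ((1 : ℕ) : ZMod (3 * r + 1)) := by push_cast; linear_combination h
      rcases diff_cases (3 * r + 1) (y - v) (x - v) 1 (by omega) h' with hc | hc <;> omega
    · have h' : (y - v) - (x - v) = ((3 * j + 2 : ℕ) : ZMod (3 * r + 1)) := by
        rw [← h]; ring
      rcases diff_cases (3 * r + 1) (x - v) (y - v) (3 * j + 2) (by omega) h' with hc | hc <;> omega
    · have h' : (x - v) - (y - v) = ((3 * j + 2 : ℕ) : ZMod (3 * r + 1)) := by
        rw [← h]; ring
      rcases diff_cases (3 * r + 1) (y - v) (x - v) (3 * j + 2) (by omega) h' with hc | hc <;> omega
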